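/- The function C is differentiable at every s ∈ [0,10] (one-sidedly at the endpoints), and its derivative is C′(s) = −(1/5)·∫₀^{(5/4)·(2−κ)} t/√((t + 2κ)² + κ²) dt − (1/2)·∫_{−(ν+2)}^{0} t/√((t + ν)² + ν²) dt, where κ := (2/5)·(s − 5) and ν := (1/2)·(s − 2). Moreover, C′(0) < 0 and C′(10) > 0. -/

import Mathlib

/-- The cost `C(s)` (under the Euclidean 2-norm) of the optimal monotone matching
candidate `γ_s` for the curves `P = ⟨(4,−2),(1,2),(1,−4)⟩`, `Q = ⟨(0,0),(5,0)⟩`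
whose parameter-space path follows the first cell's valley up to `ℓ¹`-parameter `s`. -/
noncomputable def C (s : ℝ) : ℝ :=
  2 / Real.sqrt 5 * (∫ t in (0:ℝ)..s, |t - 5|)
  + 1 / Real.sqrt 2 * (∫ t in (s + 6)..(16:ℝ), |t - 8|)
  + (∫ t in s..(s / 2 + 5), Real.sqrt (t ^ 2 - (2 * s / 5 + 8) * t + (s ^ 2 / 5 + 20)))
  + (∫ t in (s / 2 + 5)..(s + 6),
      Real.sqrt (t ^ 2 - (s + 14) * t + (s ^ 2 / 2 + 6 * s + 50)))

/-- The claimed derivative of `C`, with `κ = (2/5)·(s − 5)` and `ν = (1/2)·(s − 2)`. -/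
noncomputable def C' (s : ℝ) : ℝ :=
  -(1 / 5) * (∫ t in (0:ℝ)..(5 / 4 * (2 - 2 / 5 * (s - 5))),
      t / Real.sqrt ((t + 2 * (2 / 5 * (s - 5))) ^ 2 + (2 / 5 * (s - 5)) ^ 2))
  - 1 / 2 * (∫ t in (-(1 / 2 * (s - 2) + 2))..(0:ℝ),
      t / Real.sqrt ((t + 1 / 2 * (s - 2)) ^ 2 + (1 / 2 * (s - 2)) ^ 2))

open MeasureTheory Set Filter Metric Asymptotics
open scoped Topology
set_option maxHeartbeats 400000



lemma moving_endpoint {f : ℝ → ℝ → ℝ} (hf : Continuous (Function.uncurry f))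
    {b : ℝ → ℝ} {b' s₀ : ℝ} (hb : HasDerivAt b b' s₀) :
    HasDerivAt (fun s => ∫ t in (b s₀)..(b s), f s t) (b' * f s₀ (b s₀)) s₀ := by
  have hcs : ∀ s : ℝ, Continuous (f s) := fun s =>
    hf.comp (continuous_const.prodMk continuous_id)
  have hg : HasDerivAt (fun s => ∫ t in (b s₀)..(b s), f s₀ t) (f s₀ (b s₀) * b') s₀ := by
    have hFTC : HasDerivAt (fun y => ∫ t in (b s₀)..y, f s₀ t) (f s₀ (b s₀)) (b s₀) :=
      intervalIntegral.integral_hasDerivAt_right ((hcs s₀).intervalIntegrable _ _)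
        ((hcs s₀).stronglyMeasurableAtFilter _ _) (hcs s₀).continuousAt
    exact hFTC.comp s₀ hb
  have hr : HasDerivAt
      (fun s => (∫ t in (b s₀)..(b s), f s t) - ∫ t in (b s₀)..(b s), f s₀ t) 0 s₀ := by
    rw [hasDerivAt_iff_isLittleO]
    simp only [intervalIntegral.integral_same, sub_self, sub_zero, smul_zero]
    rw [Asymptotics.isLittleO_iff]
    intro c hc
    obtain ⟨L, hL, hbd⟩ := hb.isBigO_sub.exists_pos
    have hbd' := hbd.bound
    have hK : IsCompact ((Icc (s₀-1) (s₀+1)) ×ˢ (Icc (b s₀ - 1) (b s₀ + 1))) :=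
      isCompact_Icc.prod isCompact_Icc
    have hUC := hK.uniformContinuousOn_of_continuous hf.continuousOn
    rw [Metric.uniformContinuousOn_iff] at hUC
    obtain ⟨δ, hδ, hδ'⟩ := hUC (c / L) (by positivity)
    have hbc : ∀ᶠ s in 𝓝 s₀, |b s - b s₀| ≤ 1 := by
      have := hb.continuousAt.tendsto (Metric.ball_mem_nhds (b s₀) one_pos)
      filter_upwards [this] with s hs
      rw [Set.mem_preimage, Metric.mem_ball, Real.dist_eq] at hs; exact hs.le
    have hsd : ∀ᶠ s in 𝓝 s₀, |s - s₀| < min δ 1 := by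
      filter_upwards [Metric.ball_mem_nhds s₀ (lt_min hδ one_pos)] with s hs
      simpa [Real.dist_eq] using hs
    filter_upwards [hbd', hbc, hsd] with s h1 h2 h3
    have habs := abs_lt.mp h3
    have h3δ : |s - s₀| < δ := lt_of_lt_of_le h3 (min_le_left _ _)
    have h31 : |s - s₀| < 1 := lt_of_lt_of_le h3 (min_le_right _ _)
    have hsub : (∫ t in (b s₀)..(b s), f s t) - ∫ t in (b s₀)..(b s), f s₀ t
        = ∫ t in (b s₀)..(b s), (f s t - f s₀ t) :=
      (intervalIntegral.integral_sub ((hcs s).intervalIntegrable _ _)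
        ((hcs s₀).intervalIntegrable _ _)).symm
    rw [hsub]
    have hbound : ∀ t ∈ Set.uIoc (b s₀) (b s), ‖f s t - f s₀ t‖ ≤ c / L := by
      intro t ht
      have ht2 := Set.uIoc_subset_uIcc ht
      rw [Set.mem_uIcc] at ht2
      have habs2 := abs_le.mp h2
      have ht' : t ∈ Icc (b s₀ - 1) (b s₀ + 1) := by
        rcases ht2 with ⟨ha, hbb⟩ | ⟨ha, hbb⟩ <;> constructor <;> linarith
    -- (s,t), (s₀,t) ∈ K
      have hsI : s ∈ Icc (s₀-1) (s₀+1) := by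
        have := abs_lt.mp h31; constructor <;> linarith [this.1, this.2]
      have hs0I : s₀ ∈ Icc (s₀-1) (s₀+1) := by constructor <;> linarith
      have hd : dist ((s,t) : ℝ × ℝ) (s₀,t) = dist s s₀ := by
        simp [Prod.dist_eq, dist_nonneg]
      have := hδ' (s, t) ⟨hsI, ht'⟩ (s₀, t) ⟨hs0I, ht'⟩ (by
        rw [hd, Real.dist_eq]; exact h3δ)
      simpa [Function.uncurry, Real.dist_eq, Real.norm_eq_abs] using this.le
    calc ‖∫ t in (b s₀)..(b s), (f s t - f s₀ t)‖
        ≤ c / L * |b s - b s₀| := intervalIntegral.norm_integral_le_of_norm_le_const hbound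
      _ ≤ c / L * (L * ‖s - s₀‖) := by
          apply mul_le_mul_of_nonneg_left _ (by positivity)
          simpa [Real.norm_eq_abs] using h1
      _ = c * ‖s - s₀‖ := by rw [← mul_assoc, div_mul_cancel₀ _ hL.ne']
  have h := hg.add hr
  have heq : (fun s => (∫ t in (b s₀)..(b s), f s₀ t) +
      ((∫ t in (b s₀)..(b s), f s t) - ∫ t in (b s₀)..(b s), f s₀ t))
      = fun s => ∫ t in (b s₀)..(b s), f s t := by funext s; ring
  simp only [Pi.add_def] at h
  rw [heq] at h
  exact h.congr_deriv (by ring)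

lemma param_sqrt {α β γ δ : ℝ} (hα : 0 ≤ α) (hγ : 0 < γ) (hαγ : α + γ ≤ 1) (a b x₀ : ℝ) :
    HasDerivAt (fun x => ∫ t in a..b, Real.sqrt ((t - (α*x+β))^2 + (γ*x+δ)^2))
      (∫ t in a..b, (γ*(γ*x₀+δ) - α*(t - (α*x₀+β))) /
        Real.sqrt ((t - (α*x₀+β))^2 + (γ*x₀+δ)^2)) x₀ := by
  set t₀ : ℝ := α*(-δ/γ)+β with ht₀
  have hqpos : ∀ x t : ℝ, t ≠ t₀ → 0 < (t - (α*x+β))^2 + (γ*x+δ)^2 := by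
    intro x t ht
    rcases eq_or_ne (γ*x+δ) 0 with hk | hk
    · have hx : x = -δ/γ := by field_simp; linarith
      have hu : t - (α*x+β) ≠ 0 := by
        rw [hx]; intro h; exact ht (by rw [ht₀]; exact sub_eq_zero.mp h)
      have h1 : 0 < (t - (α*x+β))^2 := lt_of_le_of_ne (sq_nonneg _) (Ne.symm (pow_ne_zero 2 hu))
      nlinarith [sq_nonneg (γ*x+δ)]
    · have h1 : 0 < (γ*x+δ)^2 := lt_of_le_of_ne (sq_nonneg _) (Ne.symm (pow_ne_zero 2 hk))
      nlinarith [sq_nonneg (t - (α*x+β))]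
  have hcont : ∀ x : ℝ, Continuous fun t : ℝ => Real.sqrt ((t - (α*x+β))^2 + (γ*x+δ)^2) := by
    intro x; exact Real.continuous_sqrt.comp (by fun_prop)
  have hae : ∀ᵐ t : ℝ, t ≠ t₀ := by
    have h : {t : ℝ | ¬ t ≠ t₀} = {t₀} := by ext u; simp
    rw [ae_iff, h]; exact measure_singleton t₀
  have key := (intervalIntegral.hasDerivAt_integral_of_dominated_loc_of_deriv_le
    (F := fun x t => Real.sqrt ((t - (α*x+β))^2 + (γ*x+δ)^2))
    (F' := fun x t => (γ*(γ*x+δ) - α*(t - (α*x+β))) /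
        Real.sqrt ((t - (α*x+β))^2 + (γ*x+δ)^2))
    (bound := fun _ => 1) (μ := volume) (a := a) (b := b) (x₀ := x₀) (s := ball x₀ 1)
    (ball_mem_nhds x₀ one_pos) ?_ ?_ ?_ ?_ ?_ ?_).2
  · exact key
  · exact Eventually.of_forall fun x => (hcont x).aestronglyMeasurable
  · exact (hcont x₀).intervalIntegrable _ _
  · apply Measurable.aestronglyMeasurable
    fun_prop
  · filter_upwards [hae] with t ht _ x _
    have hq := hqpos x t ht
    have hs : 0 < Real.sqrt ((t - (α*x+β))^2 + (γ*x+δ)^2) := Real.sqrt_pos.mpr hq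
    have hu : |t - (α*x+β)| ≤ Real.sqrt ((t - (α*x+β))^2 + (γ*x+δ)^2) := by
      rw [← Real.sqrt_sq_eq_abs]
      exact Real.sqrt_le_sqrt (by nlinarith [sq_nonneg (γ*x+δ)])
    have hk : |γ*x+δ| ≤ Real.sqrt ((t - (α*x+β))^2 + (γ*x+δ)^2) := by
      rw [← Real.sqrt_sq_eq_abs]
      exact Real.sqrt_le_sqrt (by nlinarith [sq_nonneg (t - (α*x+β))])
    rw [Real.norm_eq_abs, abs_div, abs_of_pos hs, div_le_one hs]
    calc |γ*(γ*x+δ) - α*(t - (α*x+β))| ≤ γ*|γ*x+δ| + α*|t - (α*x+β)| := by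
          refine (abs_sub _ _).trans ?_
          rw [abs_mul, abs_mul, abs_of_nonneg hγ.le, abs_of_nonneg hα]
      _ ≤ 1 * Real.sqrt ((t - (α*x+β))^2 + (γ*x+δ)^2) := by nlinarith
      _ = _ := one_mul _
  · exact intervalIntegrable_const
  · filter_upwards [hae] with t ht _ x _
    have hq := hqpos x t ht
    have hs : 0 < Real.sqrt ((t - (α*x+β))^2 + (γ*x+δ)^2) := Real.sqrt_pos.mpr hq
    have hq' : HasDerivAt (fun x : ℝ => (t - (α*x+β))^2 + (γ*x+δ)^2)
        (2*(t - (α*x+β))*(-α) + 2*(γ*x+δ)*γ) x := by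
      have h1 : HasDerivAt (fun x : ℝ => t - (α*x+β)) (-α) x := by
        simpa using (((hasDerivAt_id x).const_mul α).add_const β).const_sub t
      have h2 : HasDerivAt (fun x : ℝ => γ*x+δ) γ x := by
        simpa using ((hasDerivAt_id x).const_mul γ).add_const δ
      simpa [mul_comm, Pi.add_def, Pi.pow_def] using ((h1.pow 2).add (h2.pow 2))
    have := hq'.sqrt hq.ne'
    refine this.congr_deriv (Eq.symm ?_)
    rw [div_eq_div_iff hs.ne' (by positivity)]
    ring

noncomputable def f3 (s t : ℝ) : ℝ := Real.sqrt ((t - (1/5*s+4))^2 + (2/5*s + -2)^2)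
noncomputable def f4 (s t : ℝ) : ℝ := Real.sqrt ((t - (1/2*s+7))^2 + (1/2*s + -1)^2)

lemma f3_cont : Continuous (Function.uncurry f3) := by
  unfold Function.uncurry f3
  exact Real.continuous_sqrt.comp (by fun_prop)

lemma f4_cont : Continuous (Function.uncurry f4) := by
  unfold Function.uncurry f4
  exact Real.continuous_sqrt.comp (by fun_prop)

lemma f3_cont' (s : ℝ) : Continuous (f3 s) := by
  unfold f3; exact Real.continuous_sqrt.comp (by fun_prop)

lemma f4_cont' (s : ℝ) : Continuous (f4 s) := by
  unfold f4; exact Real.continuous_sqrt.comp (by fun_prop)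

lemma hpar3 (s₀ : ℝ) : HasDerivAt (fun x => ∫ t in s₀..(s₀/2+5), f3 x t)
    (∫ t in s₀..(s₀/2+5), (2/5*(2/5*s₀ + -2) - 1/5*(t - (1/5*s₀+4))) /
      Real.sqrt ((t - (1/5*s₀+4))^2 + (2/5*s₀ + -2)^2)) s₀ := by
  unfold f3
  exact param_sqrt (α := 1/5) (β := 4) (γ := 2/5) (δ := -2)
    (by norm_num) (by norm_num) (by norm_num) s₀ (s₀/2+5) s₀

lemma hpar4 (s₀ : ℝ) : HasDerivAt (fun x => ∫ t in (s₀/2+5)..(s₀+6), f4 x t)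
    (∫ t in (s₀/2+5)..(s₀+6), (1/2*(1/2*s₀ + -1) - 1/2*(t - (1/2*s₀+7))) /
      Real.sqrt ((t - (1/2*s₀+7))^2 + (1/2*s₀ + -1)^2)) s₀ := by
  unfold f4
  exact param_sqrt (α := 1/2) (β := 7) (γ := 1/2) (δ := -1)
    (by norm_num) (by norm_num) (by norm_num) (s₀/2+5) (s₀+6) s₀

lemma T3_deriv (s₀ : ℝ) : HasDerivAt (fun s => ∫ t in s..(s/2+5), f3 s t)
    ((∫ t in s₀..(s₀/2+5), (2/5*(2/5*s₀ + -2) - 1/5*(t - (1/5*s₀+4))) /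
        Real.sqrt ((t - (1/5*s₀+4))^2 + (2/5*s₀ + -2)^2))
      + 1/2 * f3 s₀ (s₀/2+5) - 1 * f3 s₀ s₀) s₀ := by
  have hmb : HasDerivAt (fun s : ℝ => s/2+5) (1/2) s₀ := by
    simpa using ((hasDerivAt_id s₀).div_const 2).add_const 5
  have hB : HasDerivAt (fun s => ∫ t in (s₀/2+5)..(s/2+5), f3 s t)
      (1/2 * f3 s₀ (s₀/2+5)) s₀ := moving_endpoint (b := fun s => s/2+5) f3_cont hmb
  have hA : HasDerivAt (fun s => ∫ t in s₀..s, f3 s t) (1 * f3 s₀ s₀) s₀ :=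
    moving_endpoint (b := fun s => s) f3_cont (hasDerivAt_id s₀)
  have h := ((hpar3 s₀).add hB).sub hA
  have hfun : (fun s => ((∫ t in s₀..(s₀/2+5), f3 s t) +
      ∫ t in (s₀/2+5)..(s/2+5), f3 s t) - ∫ t in s₀..s, f3 s t)
      = fun s => ∫ t in s..(s/2+5), f3 s t := by
    funext s
    have i1 : IntervalIntegrable (f3 s) volume s s₀ := (f3_cont' s).intervalIntegrable _ _
    have i2 : IntervalIntegrable (f3 s) volume s₀ (s₀/2+5) := (f3_cont' s).intervalIntegrable _ _
    have i3 : IntervalIntegrable (f3 s) volume (s₀/2+5) (s/2+5) :=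
      (f3_cont' s).intervalIntegrable _ _
    have k1 := intervalIntegral.integral_add_adjacent_intervals i1 i2
    have k2 := intervalIntegral.integral_add_adjacent_intervals (i1.trans i2) i3
    have k3 := intervalIntegral.integral_symm (μ := volume) s s₀ (f := f3 s)
    linarith [k1, k2, k3]
  simp only [Pi.add_def, Pi.sub_def] at h
  rw [hfun] at h
  exact h

lemma T4_deriv (s₀ : ℝ) : HasDerivAt (fun s => ∫ t in (s/2+5)..(s+6), f4 s t)
    ((∫ t in (s₀/2+5)..(s₀+6), (1/2*(1/2*s₀ + -1) - 1/2*(t - (1/2*s₀+7))) /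
        Real.sqrt ((t - (1/2*s₀+7))^2 + (1/2*s₀ + -1)^2))
      + 1 * f4 s₀ (s₀+6) - 1/2 * f4 s₀ (s₀/2+5)) s₀ := by
  have hmb : HasDerivAt (fun s : ℝ => s/2+5) (1/2) s₀ := by
    simpa using ((hasDerivAt_id s₀).div_const 2).add_const 5
  have hmc : HasDerivAt (fun s : ℝ => s+6) (1 : ℝ) s₀ := (hasDerivAt_id s₀).add_const 6
  have hB : HasDerivAt (fun s => ∫ t in (s₀/2+5)..(s/2+5), f4 s t)
      (1/2 * f4 s₀ (s₀/2+5)) s₀ := moving_endpoint (b := fun s => s/2+5) f4_cont hmb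
  have hC : HasDerivAt (fun s => ∫ t in (s₀+6)..(s+6), f4 s t)
      (1 * f4 s₀ (s₀+6)) s₀ := moving_endpoint (b := fun s => s+6) f4_cont hmc
  have h := ((hpar4 s₀).add hC).sub hB
  have hfun : (fun s => ((∫ t in (s₀/2+5)..(s₀+6), f4 s t) +
      ∫ t in (s₀+6)..(s+6), f4 s t) - ∫ t in (s₀/2+5)..(s/2+5), f4 s t)
      = fun s => ∫ t in (s/2+5)..(s+6), f4 s t := by
    funext s
    have i1 : IntervalIntegrable (f4 s) volume (s/2+5) (s₀/2+5) :=
      (f4_cont' s).intervalIntegrable _ _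
    have i2 : IntervalIntegrable (f4 s) volume (s₀/2+5) (s₀+6) := (f4_cont' s).intervalIntegrable _ _
    have i3 : IntervalIntegrable (f4 s) volume (s₀+6) (s+6) := (f4_cont' s).intervalIntegrable _ _
    have k1 := intervalIntegral.integral_add_adjacent_intervals i1 i2
    have k2 := intervalIntegral.integral_add_adjacent_intervals (i1.trans i2) i3
    have k3 := intervalIntegral.integral_symm (μ := volume) (s/2+5) (s₀/2+5) (f := f4 s)
    linarith [k1, k2, k3]
  simp only [Pi.add_def, Pi.sub_def] at h
  rw [hfun] at h
  exact h

lemma E1 (s : ℝ) : f3 s s = 2 / Real.sqrt 5 * |s - 5| := by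
  unfold f3
  rw [show (s - (1/5*s+4))^2 + (2/5*s + -2)^2 = (2 / Real.sqrt 5 * |s-5|)^2 by
    rw [mul_pow, div_pow, sq_abs, Real.sq_sqrt (by norm_num : (0:ℝ) ≤ 5)]; ring]
  exact Real.sqrt_sq (by positivity)

lemma E2 (s : ℝ) : f4 s (s+6) = 1 / Real.sqrt 2 * |s - 2| := by
  unfold f4
  rw [show (s+6 - (1/2*s+7))^2 + (1/2*s + -1)^2 = (1 / Real.sqrt 2 * |s-2|)^2 by
    rw [mul_pow, div_pow, sq_abs, Real.sq_sqrt (by norm_num : (0:ℝ) ≤ 2)]; ring]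
  exact Real.sqrt_sq (by positivity)

lemma E3 (s : ℝ) : f3 s (s/2+5) = f4 s (s/2+5) := by
  unfold f3 f4; congr 1; ring

lemma I3eq (s₀ : ℝ) :
    (∫ t in s₀..(s₀/2+5), (2/5*(2/5*s₀ + -2) - 1/5*(t - (1/5*s₀+4))) /
        Real.sqrt ((t - (1/5*s₀+4))^2 + (2/5*s₀ + -2)^2))
    = -(1/5) * ∫ t in (0:ℝ)..(5 / 4 * (2 - 2 / 5 * (s₀ - 5))),
        t / Real.sqrt ((t + 2 * (2 / 5 * (s₀ - 5))) ^ 2 + (2 / 5 * (s₀ - 5)) ^ 2) := by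
  rw [show (0:ℝ) = s₀ - s₀ by ring,
      show (5:ℝ) / 4 * (2 - 2 / 5 * (s₀ - 5)) = s₀/2+5 - s₀ by ring,
      ← intervalIntegral.integral_comp_sub_right
        (fun u => u / Real.sqrt ((u + 2 * (2 / 5 * (s₀ - 5))) ^ 2 + (2 / 5 * (s₀ - 5)) ^ 2)) s₀,
      ← intervalIntegral.integral_const_mul]
  apply intervalIntegral.integral_congr
  intro t _
  beta_reduce
  show _ = -(1/5) * ((t - s₀) /
    Real.sqrt ((t - s₀ + 2 * (2 / 5 * (s₀ - 5))) ^ 2 + (2 / 5 * (s₀ - 5)) ^ 2))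
  rw [show (2/5*(2/5*s₀ + -2) - 1/5*(t - (1/5*s₀+4))) = -(1/5) * (t - s₀) by ring,
      show ((t - (1/5*s₀+4))^2 + (2/5*s₀ + -2)^2)
        = ((t - s₀ + 2 * (2 / 5 * (s₀ - 5))) ^ 2 + (2 / 5 * (s₀ - 5)) ^ 2) by ring,
      mul_div_assoc]

lemma I4eq (s₀ : ℝ) :
    (∫ t in (s₀/2+5)..(s₀+6), (1/2*(1/2*s₀ + -1) - 1/2*(t - (1/2*s₀+7))) /
        Real.sqrt ((t - (1/2*s₀+7))^2 + (1/2*s₀ + -1)^2))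
    = -(1/2) * ∫ t in (-(1 / 2 * (s₀ - 2) + 2))..(0:ℝ),
        t / Real.sqrt ((t + 1 / 2 * (s₀ - 2)) ^ 2 + (1 / 2 * (s₀ - 2)) ^ 2) := by
  rw [show (0:ℝ) = s₀+6 - (s₀+6) by ring,
      show -(1 / 2 * (s₀ - 2) + 2) = s₀/2+5 - (s₀+6) by ring,
      ← intervalIntegral.integral_comp_sub_right
        (fun u => u / Real.sqrt ((u + 1 / 2 * (s₀ - 2)) ^ 2 + (1 / 2 * (s₀ - 2)) ^ 2)) (s₀+6),
      ← intervalIntegral.integral_const_mul]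
  apply intervalIntegral.integral_congr
  intro t _
  beta_reduce
  show _ = -(1/2) * ((t - (s₀+6)) /
    Real.sqrt ((t - (s₀+6) + 1 / 2 * (s₀ - 2)) ^ 2 + (1 / 2 * (s₀ - 2)) ^ 2))
  rw [show (1/2*(1/2*s₀ + -1) - 1/2*(t - (1/2*s₀+7))) = -(1/2) * (t - (s₀+6)) by ring,
      show ((t - (1/2*s₀+7))^2 + (1/2*s₀ + -1)^2)
        = ((t - (s₀+6) + 1 / 2 * (s₀ - 2)) ^ 2 + (1 / 2 * (s₀ - 2)) ^ 2) by ring,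
      mul_div_assoc]

lemma hT1 (s₀ : ℝ) : HasDerivAt (fun s => ∫ t in (0:ℝ)..s, |t - 5|) |s₀ - 5| s₀ := by
  have hc : Continuous fun t : ℝ => |t - 5| := by fun_prop
  exact intervalIntegral.integral_hasDerivAt_right (hc.intervalIntegrable _ _)
    (hc.stronglyMeasurableAtFilter _ _) hc.continuousAt

lemma hT2 (s₀ : ℝ) : HasDerivAt (fun s => ∫ t in (s+6)..(16:ℝ), |t - 8|)
    (-|s₀+6-8| * 1) s₀ := by
  have hc : Continuous fun t : ℝ => |t - 8| := by fun_prop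
  have h : HasDerivAt (fun u => ∫ t in u..(16:ℝ), |t - 8|) (-|s₀+6-8|) (s₀+6) :=
    intervalIntegral.integral_hasDerivAt_left (hc.intervalIntegrable _ _)
      (hc.stronglyMeasurableAtFilter _ _) hc.continuousAt
  exact h.comp s₀ ((hasDerivAt_id s₀).add_const 6)

lemma mainDeriv (s₀ : ℝ) : HasDerivAt C (C' s₀) s₀ := by
  have h1 := (hT1 s₀).const_mul (2 / Real.sqrt 5)
  have h2 := (hT2 s₀).const_mul (1 / Real.sqrt 2)
  have h3 := T3_deriv s₀
  have h4 := T4_deriv s₀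
  have htot := ((h1.add h2).add h3).add h4
  have hCfun : C = fun s => ((2 / Real.sqrt 5 * (∫ t in (0:ℝ)..s, |t - 5|)
      + 1 / Real.sqrt 2 * (∫ t in (s + 6)..(16:ℝ), |t - 8|))
      + (∫ t in s..(s/2+5), f3 s t)) + (∫ t in (s/2+5)..(s+6), f4 s t) := by
    funext s
    unfold C
    rw [show (∫ t in s..(s / 2 + 5),
          Real.sqrt (t ^ 2 - (2 * s / 5 + 8) * t + (s ^ 2 / 5 + 20)))
        = ∫ t in s..(s/2+5), f3 s t from
        intervalIntegral.integral_congr (fun t _ => by unfold f3; congr 1; ring),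
      show (∫ t in (s / 2 + 5)..(s + 6),
          Real.sqrt (t ^ 2 - (s + 14) * t + (s ^ 2 / 2 + 6 * s + 50)))
        = ∫ t in (s/2+5)..(s+6), f4 s t from
        intervalIntegral.integral_congr (fun t _ => by unfold f4; congr 1; ring)]
  rw [hCfun]
  simp only [Pi.add_def] at htot
  refine htot.congr_deriv (Eq.symm ?_)
  rw [I3eq s₀, I4eq s₀, E1 s₀, E2 s₀, E3 s₀,
    show |s₀+6-8| = |s₀-2| from by rw [show s₀+6-8 = s₀-2 by ring]]
  unfold C'
  ring

lemma sqrt2_ge_one : (1:ℝ) ≤ Real.sqrt 2 := by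
  rw [show (1:ℝ) = Real.sqrt 1 by simp]
  exact Real.sqrt_le_sqrt (by norm_num)

lemma C'0_neg : C' 0 < 0 := by
  unfold C'
  rw [show (5:ℝ) / 4 * (2 - 2 / 5 * ((0:ℝ) - 5)) = 5 by norm_num,
      show -(1 / 2 * ((0:ℝ) - 2) + 2) = -1 by norm_num]
  have hc4 : ((2:ℝ) / 5 * ((0:ℝ) - 5)) ^ 2 = 4 := by norm_num
  have hc1 : ((1:ℝ) / 2 * ((0:ℝ) - 2)) ^ 2 = 1 := by norm_num
  have hD1 : ∀ t : ℝ, 0 < (t + 2 * (2 / 5 * ((0:ℝ) - 5))) ^ 2 + (2 / 5 * ((0:ℝ) - 5)) ^ 2 := by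
    intro t; nlinarith [sq_nonneg (t + 2 * (2 / 5 * ((0:ℝ) - 5)))]
  have hD2 : ∀ t : ℝ, 0 < (t + 1 / 2 * ((0:ℝ) - 2)) ^ 2 + (1 / 2 * ((0:ℝ) - 2)) ^ 2 := by
    intro t; nlinarith [sq_nonneg (t + 1 / 2 * ((0:ℝ) - 2))]
  have hg1 : Continuous (fun t : ℝ =>
      t / Real.sqrt ((t + 2 * (2 / 5 * ((0:ℝ) - 5))) ^ 2 + (2 / 5 * ((0:ℝ) - 5)) ^ 2)) := by
    apply Continuous.div continuous_id (Real.continuous_sqrt.comp (by fun_prop))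
    intro t; exact (Real.sqrt_pos.mpr (hD1 t)).ne'
  have hg2 : Continuous (fun t : ℝ =>
      t / Real.sqrt ((t + 1 / 2 * ((0:ℝ) - 2)) ^ 2 + (1 / 2 * ((0:ℝ) - 2)) ^ 2)) := by
    apply Continuous.div continuous_id (Real.continuous_sqrt.comp (by fun_prop))
    intro t; exact (Real.sqrt_pos.mpr (hD2 t)).ne'
  have h20pos : (0:ℝ) < Real.sqrt 20 := Real.sqrt_pos.mpr (by norm_num)
  have h20le : Real.sqrt 20 ≤ 5 := by
    rw [show (5:ℝ) = Real.sqrt 25 by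
      rw [show (25:ℝ) = 5 ^ 2 by norm_num]; exact (Real.sqrt_sq (by norm_num)).symm]
    exact Real.sqrt_le_sqrt (by norm_num)
  have h2pos : (0:ℝ) < Real.sqrt 2 := Real.sqrt_pos.mpr (by norm_num)
  have hA : (5:ℝ)/2 ≤ ∫ t in (0:ℝ)..5,
      t / Real.sqrt ((t + 2 * (2 / 5 * ((0:ℝ) - 5))) ^ 2 + (2 / 5 * ((0:ℝ) - 5)) ^ 2) := by
    have step : (∫ t in (0:ℝ)..5, t / Real.sqrt 20) ≤ ∫ t in (0:ℝ)..5,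
        t / Real.sqrt ((t + 2 * (2 / 5 * ((0:ℝ) - 5))) ^ 2 + (2 / 5 * ((0:ℝ) - 5)) ^ 2) := by
      apply intervalIntegral.integral_mono_on (by norm_num)
        ((continuous_id.div_const _).intervalIntegrable _ _) (hg1.intervalIntegrable _ _)
      intro t ht
      have h1 : Real.sqrt ((t + 2 * (2 / 5 * ((0:ℝ) - 5))) ^ 2 + (2 / 5 * ((0:ℝ) - 5)) ^ 2)
          ≤ Real.sqrt 20 := by
        apply Real.sqrt_le_sqrt
        have h1' := ht.1; have h2' := ht.2
        nlinarith
      have h2 : 0 < Real.sqrt ((t + 2 * (2 / 5 * ((0:ℝ) - 5))) ^ 2 + (2 / 5 * ((0:ℝ) - 5)) ^ 2) :=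
        Real.sqrt_pos.mpr (hD1 t)
      rw [div_le_div_iff₀ h20pos h2]
      simp only [id_eq]
      nlinarith [mul_nonneg ht.1 (sub_nonneg.mpr h1)]
    refine le_trans ?_ step
    rw [intervalIntegral.integral_div, integral_id]
    rw [le_div_iff₀ h20pos]
    nlinarith
  have hB : -(1/2) ≤ ∫ t in (-1:ℝ)..0,
      t / Real.sqrt ((t + 1 / 2 * ((0:ℝ) - 2)) ^ 2 + (1 / 2 * ((0:ℝ) - 2)) ^ 2) := by
    have step : (∫ t in (-1:ℝ)..0, t / Real.sqrt 2) ≤ ∫ t in (-1:ℝ)..0,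
        t / Real.sqrt ((t + 1 / 2 * ((0:ℝ) - 2)) ^ 2 + (1 / 2 * ((0:ℝ) - 2)) ^ 2) := by
      apply intervalIntegral.integral_mono_on (by norm_num)
        ((continuous_id.div_const _).intervalIntegrable _ _) (hg2.intervalIntegrable _ _)
      intro t ht
      have h1 : Real.sqrt 2 ≤
          Real.sqrt ((t + 1 / 2 * ((0:ℝ) - 2)) ^ 2 + (1 / 2 * ((0:ℝ) - 2)) ^ 2) := by
        apply Real.sqrt_le_sqrt
        have h1' := ht.1; have h2' := ht.2
        nlinarith
      have h2 : 0 < Real.sqrt ((t + 1 / 2 * ((0:ℝ) - 2)) ^ 2 + (1 / 2 * ((0:ℝ) - 2)) ^ 2) :=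
        Real.sqrt_pos.mpr (hD2 t)
      rw [div_le_div_iff₀ h2pos h2]
      simp only [id_eq]
      nlinarith [mul_nonneg (neg_nonneg.mpr ht.2) (sub_nonneg.mpr h1)]
    refine le_trans ?_ step
    rw [intervalIntegral.integral_div, integral_id]
    rw [show ((0:ℝ) ^ 2 - (-1:ℝ) ^ 2) / 2 = -(1/2) by norm_num]
    rw [neg_div, neg_le_neg_iff]
    exact div_le_self (by norm_num) sqrt2_ge_one
  nlinarith [hA, hB]

lemma C'10_pos : C' 10 > 0 := by
  unfold C'
  rw [show (5:ℝ) / 4 * (2 - 2 / 5 * ((10:ℝ) - 5)) = 0 by norm_num,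
      intervalIntegral.integral_same,
      show -(1 / 2 * ((10:ℝ) - 2) + 2) = -6 by norm_num]
  have hD : ∀ t : ℝ, 0 < (t + 1 / 2 * ((10:ℝ) - 2)) ^ 2 + (1 / 2 * ((10:ℝ) - 2)) ^ 2 := by
    intro t; nlinarith [sq_nonneg (t + 1 / 2 * ((10:ℝ) - 2))]
  have hg : Continuous (fun t : ℝ =>
      t / Real.sqrt ((t + 1 / 2 * ((10:ℝ) - 2)) ^ 2 + (1 / 2 * ((10:ℝ) - 2)) ^ 2)) := by
    apply Continuous.div continuous_id (Real.continuous_sqrt.comp (by fun_prop))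
    intro t; exact (Real.sqrt_pos.mpr (hD t)).ne'
  have hneg : (∫ t in (-6:ℝ)..0,
      t / Real.sqrt ((t + 1 / 2 * ((10:ℝ) - 2)) ^ 2 + (1 / 2 * ((10:ℝ) - 2)) ^ 2)) < 0 := by
    have hptwise : ∀ x ∈ Ioo (-6:ℝ) 0, 0 < -(x / Real.sqrt ((x + 1 / 2 * ((10:ℝ) - 2)) ^ 2
        + (1 / 2 * ((10:ℝ) - 2)) ^ 2)) := by
      intro x hx
      have hd : 0 < Real.sqrt ((x + 1 / 2 * ((10:ℝ) - 2)) ^ 2 + (1 / 2 * ((10:ℝ) - 2)) ^ 2) :=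
        Real.sqrt_pos.mpr (hD x)
      exact neg_pos.mpr (div_neg_of_neg_of_pos hx.2 hd)
    have hpos := intervalIntegral.intervalIntegral_pos_of_pos_on
      (hg.neg.intervalIntegrable (-6) 0) hptwise (by norm_num : (-6:ℝ) < 0)
    simp only [Pi.neg_apply, intervalIntegral.integral_neg] at hpos
    linarith
  linarith [hneg]

/-- `C` is differentiable at every `s ∈ [0,10]` (one-sidedly at the
endpoints) with derivative `C'(s)`; moreover `C'(0) < 0` and `C'(10) > 0`. -/
theorem C_hasDerivWithinAt :
    (∀ s ∈ Set.Icc (0 : ℝ) 10, HasDerivWithinAt C (C' s) (Set.Icc (0 : ℝ) 10) s) ∧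
    C' 0 < 0 ∧ C' 10 > 0 :=
  ⟨fun s _ => (mainDeriv s).hasDerivWithinAt, C'0_neg, C'10_pos⟩
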